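/- arXiv:2604.16000 — 5 statements merged into one kernel-verified Lean document; each statement's English description precedes it below -/
import Mathlib

section
/- For k > 0, p ≥ 1/2, and u, v > 0, the function E_{k,p}(u,v) = (uv)^(-k) + √(uv)·(u/v)^p is strictly convex on {(u,v) : u > 0, v > 0}, in the sense that its Hessian is positive definite at every point. -/
open Real Matrix

noncomputable def pdu (f : ℝ → ℝ → ℝ) (u v : ℝ) : ℝ := deriv (fun x => f x v) u
noncomputable def pdv (f : ℝ → ℝ → ℝ) (u v : ℝ) : ℝ := deriv (fun y => f u y) v

noncomputable def hess (f : ℝ → ℝ → ℝ) (u v : ℝ) : Matrix (Fin 2) (Fin 2) ℝ :=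
  !![pdu (pdu f) u v, pdv (pdu f) u v;
     pdu (pdv f) u v, pdv (pdv f) u v]

lemma hdL (c v : ℝ) {x : ℝ} (hx : 0 < x) (hv : 0 < v) :
    HasDerivAt (fun t => (t * v) ^ c) (c * (x * v) ^ (c - 1) * v) x := by
  have h1 : HasDerivAt (fun t : ℝ => t * v) v x := by
    simpa using (hasDerivAt_id x).mul_const v
  have h2 := (Real.hasDerivAt_rpow_const (x := x * v) (p := c)
    (Or.inl (mul_pos hx hv).ne')).comp x h1
  simpa [mul_assoc, Function.comp_def] using h2

lemma hdR (c u : ℝ) {y : ℝ} (hy : 0 < y) (hu : 0 < u) :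
    HasDerivAt (fun t => (u * t) ^ c) (c * (u * y) ^ (c - 1) * u) y := by
  have h1 : HasDerivAt (fun t : ℝ => u * t) u y := by
    simpa using (hasDerivAt_id y).const_mul u
  have h2 := (Real.hasDerivAt_rpow_const (x := u * y) (p := c)
    (Or.inl (mul_pos hu hy).ne')).comp y h1
  simpa [mul_assoc, Function.comp_def] using h2

lemma posDef_2x2 (A B C : ℝ) (hA : 0 < A) (hdet : B * B < A * C) :
    (!![A, B; B, C]).PosDef := by
  have hC : 0 < C := by nlinarith [mul_self_nonneg B]
  refine posDef_iff_dotProduct_mulVec.mpr ⟨?_, ?_⟩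
  · ext i j
    fin_cases i <;> fin_cases j <;>
      simp [Matrix.conjTranspose_apply]
  · intro x hx
    have hx0 : x 0 ≠ 0 ∨ x 1 ≠ 0 := by
      by_contra h
      push_neg at h
      exact hx (funext fun i => by fin_cases i <;> simp [h.1, h.2])
    have heq : star x ⬝ᵥ (!![A, B; B, C]) *ᵥ x
        = A * (x 0)^2 + 2 * B * (x 0 * x 1) + C * (x 1)^2 := by
      simp [dotProduct, Matrix.mulVec, Fin.sum_univ_two]
      ring
    rw [heq]
    rcases hx0 with h | h
    · have h0 : 0 < (x 0)^2 := by positivity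
      nlinarith [sq_nonneg (C * x 1 + B * x 0), mul_pos (sub_pos.mpr hdet) h0]
    · have h1 : 0 < (x 1)^2 := by positivity
      nlinarith [sq_nonneg (A * x 0 + B * x 1), mul_pos (sub_pos.mpr hdet) h1]

theorem entropy_strictly_convex (k p : ℝ) (hk : 0 < k) (hp : 1 / 2 ≤ p)
    (E : ℝ → ℝ → ℝ)
    (hE : ∀ u v, E u v = (u * v) ^ (-k) + u ^ (p + 1 / 2) * v ^ (1 / 2 - p)) :
    ∀ u v : ℝ, 0 < u → 0 < v → (hess E u v).PosDef := by
  intro u v hu hv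
  set a : ℝ := p + 1 / 2 with ha
  set b : ℝ := 1 / 2 - p with hb
  -- first partial derivatives, valid at all positive points
  have hPDu : ∀ x w : ℝ, 0 < x → 0 < w →
      pdu E x w = -k * (x * w) ^ (-k - 1) * w + a * x ^ (a - 1) * w ^ b := by
    intro x w hx hw
    have hfe : (fun t => E t w) = fun t => (t * w) ^ (-k) + t ^ a * w ^ b :=
      funext fun t => hE t w
    rw [pdu, hfe]
    exact ((hdL (-k) w hx hw).add
      ((Real.hasDerivAt_rpow_const (Or.inl hx.ne')).mul_const (w ^ b))).deriv
  have hPDv : ∀ x w : ℝ, 0 < x → 0 < w →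
      pdv E x w = -k * (x * w) ^ (-k - 1) * x + x ^ a * (b * w ^ (b - 1)) := by
    intro x w hx hw
    have hfe : (fun t => E x t) = fun t => (x * t) ^ (-k) + x ^ a * t ^ b :=
      funext fun t => hE x t
    rw [pdv, hfe]
    exact ((hdR (-k) x hw hx).add
      ((Real.hasDerivAt_rpow_const (Or.inl hw.ne')).const_mul (x ^ a))).deriv
  -- second partial derivatives
  have h00 : pdu (pdu E) u v
      = -k * ((-k - 1) * (u * v) ^ (-k - 1 - 1) * v) * v
        + a * ((a - 1) * u ^ (a - 1 - 1)) * v ^ b := by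
    have hev : (fun x => pdu E x v)
        =ᶠ[nhds u] fun x => -k * (x * v) ^ (-k - 1) * v + a * x ^ (a - 1) * v ^ b :=
      (eventually_gt_nhds hu).mono fun x hx => hPDu x v hx hv
    rw [pdu, hev.deriv_eq]
    exact ((((hdL (-k - 1) v hu hv).const_mul (-k)).mul_const v).add
      (((Real.hasDerivAt_rpow_const (Or.inl hu.ne')).const_mul a).mul_const (v ^ b))).deriv
  have h01 : pdv (pdu E) u v
      = (-k * ((-k - 1) * (u * v) ^ (-k - 1 - 1) * u) * v + -k * (u * v) ^ (-k - 1) * 1)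
        + a * u ^ (a - 1) * (b * v ^ (b - 1)) := by
    have hev : (fun y => pdu E u y)
        =ᶠ[nhds v] fun y => -k * (u * y) ^ (-k - 1) * y + a * u ^ (a - 1) * y ^ b :=
      (eventually_gt_nhds hv).mono fun y hy => hPDu u y hu hy
    rw [pdv, hev.deriv_eq]
    exact ((((hdR (-k - 1) u hv hu).const_mul (-k)).mul (hasDerivAt_id v)).add
      ((Real.hasDerivAt_rpow_const (Or.inl hv.ne')).const_mul (a * u ^ (a - 1)))).deriv
  have h10 : pdu (pdv E) u v
      = (-k * ((-k - 1) * (u * v) ^ (-k - 1 - 1) * v) * u + -k * (u * v) ^ (-k - 1) * 1)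
        + a * u ^ (a - 1) * (b * v ^ (b - 1)) := by
    have hev : (fun x => pdv E x v)
        =ᶠ[nhds u] fun x => -k * (x * v) ^ (-k - 1) * x + x ^ a * (b * v ^ (b - 1)) :=
      (eventually_gt_nhds hu).mono fun x hx => hPDv x v hx hv
    rw [pdu, hev.deriv_eq]
    exact ((((hdL (-k - 1) v hu hv).const_mul (-k)).mul (hasDerivAt_id u)).add
      ((Real.hasDerivAt_rpow_const (Or.inl hu.ne')).mul_const (b * v ^ (b - 1)))).deriv
  have h11 : pdv (pdv E) u v
      = -k * ((-k - 1) * (u * v) ^ (-k - 1 - 1) * u) * u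
        + u ^ a * (b * ((b - 1) * v ^ (b - 1 - 1))) := by
    have hev : (fun y => pdv E u y)
        =ᶠ[nhds v] fun y => -k * (u * y) ^ (-k - 1) * u + u ^ a * (b * y ^ (b - 1)) :=
      (eventually_gt_nhds hv).mono fun y hy => hPDv u y hu hy
    rw [pdv, hev.deriv_eq]
    exact ((((hdR (-k - 1) u hv hu).const_mul (-k)).mul_const u).add
      (((Real.hasDerivAt_rpow_const (Or.inl hv.ne')).const_mul b).const_mul (u ^ a))).deriv
  -- abbreviations
  set P : ℝ := (u * v) ^ (-k) with hP
  set X : ℝ := u ^ a with hX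
  set Y : ℝ := v ^ b with hY
  have hPpos : 0 < P := rpow_pos_of_pos (mul_pos hu hv) _
  have hXpos : 0 < X := rpow_pos_of_pos hu _
  have hYpos : 0 < Y := rpow_pos_of_pos hv _
  have huv : (0:ℝ) < u * v := mul_pos hu hv
  have e1 : (u * v) ^ (-k - 1) = P / (u * v) := by
    rw [Real.rpow_sub huv, Real.rpow_one]
  have e2 : (u * v) ^ (-k - 1 - 1) = P / (u * v) / (u * v) := by
    rw [Real.rpow_sub huv, Real.rpow_sub huv, Real.rpow_one]
  have e3 : u ^ (a - 1) = X / u := by rw [Real.rpow_sub hu, Real.rpow_one]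
  have e4 : u ^ (a - 1 - 1) = X / u / u := by
    rw [Real.rpow_sub hu, Real.rpow_sub hu, Real.rpow_one]
  have e5 : v ^ (b - 1) = Y / v := by rw [Real.rpow_sub hv, Real.rpow_one]
  have e6 : v ^ (b - 1 - 1) = Y / v / v := by
    rw [Real.rpow_sub hv, Real.rpow_sub hv, Real.rpow_one]
  set c : ℝ := (p + 1 / 2) * (p - 1 / 2) with hc
  have hcnn : 0 ≤ c := mul_nonneg (by linarith) (by linarith)
  have A00 : pdu (pdu E) u v = (k * (k + 1) * P + c * (X * Y)) / u ^ 2 := by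
    rw [h00, e2, e4]
    field_simp
    ring
  have A01 : pdv (pdu E) u v = (k ^ 2 * P - c * (X * Y)) / (u * v) := by
    rw [h01, e1, e2, e3, e5]
    field_simp
    ring
  have A10 : pdu (pdv E) u v = (k ^ 2 * P - c * (X * Y)) / (u * v) := by
    rw [h10, e1, e2, e3, e5]
    field_simp
    ring
  have A11 : pdv (pdv E) u v = (k * (k + 1) * P + c * (X * Y)) / v ^ 2 := by
    rw [h11, e2, e6]
    field_simp
    ring
  have hmat : hess E u v
      = !![(k * (k + 1) * P + c * (X * Y)) / u ^ 2,
           (k ^ 2 * P - c * (X * Y)) / (u * v);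
           (k ^ 2 * P - c * (X * Y)) / (u * v),
           (k * (k + 1) * P + c * (X * Y)) / v ^ 2] := by
    rw [hess, A00, A01, A10, A11]
  rw [hmat]
  clear hmat A00 A01 A10 A11 h00 h01 h10 h11 hPDu hPDv e1 e2 e3 e4 e5 e6 hE
  have hZ : 0 ≤ c * (X * Y) := mul_nonneg hcnn (mul_pos hXpos hYpos).le
  apply posDef_2x2
  · have hnum : 0 < k * (k + 1) * P + c * (X * Y) :=
      add_pos_of_pos_of_nonneg (by positivity) hZ
    positivity
  · have key : (k * (k + 1) * P + c * (X * Y)) / u ^ 2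
        * ((k * (k + 1) * P + c * (X * Y)) / v ^ 2)
        - (k ^ 2 * P - c * (X * Y)) / (u * v) * ((k ^ 2 * P - c * (X * Y)) / (u * v))
        = (k * (2 * k + 1) * P * (k * P + 2 * c * (X * Y))) / (u ^ 2 * v ^ 2) := by
      field_simp
      ring
    have hpos : 0 < (k * (2 * k + 1) * P * (k * P + 2 * c * (X * Y))) / (u ^ 2 * v ^ 2) := by
      have h1 : 0 < k * P + 2 * c * (X * Y) :=
        add_pos_of_pos_of_nonneg (mul_pos hk hPpos) (by linarith)
      have h2 : 0 < k * (2 * k + 1) * P := by positivity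
      positivity
    linarith [key ▸ hpos]
end

section
/- Suppose Ψ, Θ : (0,∞) → ℝ are C² with Ψ'(r) < 0, Ψ''(r) > 0, 2rΨ''(r) + Ψ'(r) > 0, and 4ξ²Θ''(ξ) + 4ξΘ'(ξ) − Θ(ξ) ≥ 0 for all r, ξ > 0. Then E(u,v) = Ψ(uv) + √(uv)·Θ(u/v) satisfies r₁ᵀ(∇²E)r₁ > 0 and r₂ᵀ(∇²E)r₂ > 0 at every (u,v) with u, v > 0, where r₁ = (-u,v) and r₂ = (u,v). -/
open Real Matrix

lemma derivs_of_C2 (f : ℝ → ℝ) (hf : ContDiffOn ℝ 2 f (Set.Ioi 0)) :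
    (∀ x : ℝ, 0 < x → HasDerivAt f (deriv f x) x) ∧
    (∀ x : ℝ, 0 < x → HasDerivAt (deriv f) (deriv (deriv f) x) x) := by
  constructor
  · intro x hx
    exact ((hf.differentiableOn (by norm_num)).differentiableAt
      (isOpen_Ioi.mem_nhds hx)).hasDerivAt
  · intro x hx
    have h1 : ContDiffOn ℝ 1 (deriv f) (Set.Ioi 0) :=
      hf.deriv_of_isOpen isOpen_Ioi (by norm_num)
    exact ((h1.differentiableOn (by norm_num)).differentiableAt
      (isOpen_Ioi.mem_nhds hx)).hasDerivAt

lemma hD_Eu (Ψ Θ : ℝ → ℝ)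
    (hΨ1 : ∀ x : ℝ, 0 < x → HasDerivAt Ψ (deriv Ψ x) x)
    (hΘ1 : ∀ x : ℝ, 0 < x → HasDerivAt Θ (deriv Θ x) x)
    (u v : ℝ) (hu : 0 < u) (hv : 0 < v) :
    HasDerivAt (fun x => Ψ (x * v) + Real.sqrt (x * v) * Θ (x / v))
      (v * deriv Ψ (u * v) + Θ (u / v) * (v / (2 * Real.sqrt (u * v)))
        + Real.sqrt (u * v) * deriv Θ (u / v) / v) u := by
  have hA : HasDerivAt (fun x : ℝ => x * v) v u := by
    simpa using (hasDerivAt_id u).mul_const v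
  have hB : HasDerivAt (fun x : ℝ => x / v) (1 / v) u := by
    simpa using (hasDerivAt_id u).div_const v
  have hP : HasDerivAt (fun x => Ψ (x * v)) (deriv Ψ (u * v) * v) u :=
    (hΨ1 _ (by positivity)).comp u hA
  have hs : HasDerivAt (fun x => Real.sqrt (x * v)) (1 / (2 * Real.sqrt (u * v)) * v) u :=
    (Real.hasDerivAt_sqrt (by positivity)).comp u hA
  have hT : HasDerivAt (fun x => Θ (x / v)) (deriv Θ (u / v) * (1 / v)) u :=
    (hΘ1 _ (by positivity)).comp u hB
  have := hP.add (hs.mul hT)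
  refine this.congr_deriv ?_
  have hsq : Real.sqrt (u * v) ≠ 0 := by positivity
  field_simp
  ring

lemma hD_Ev (Ψ Θ : ℝ → ℝ)
    (hΨ1 : ∀ x : ℝ, 0 < x → HasDerivAt Ψ (deriv Ψ x) x)
    (hΘ1 : ∀ x : ℝ, 0 < x → HasDerivAt Θ (deriv Θ x) x)
    (u v : ℝ) (hu : 0 < u) (hv : 0 < v) :
    HasDerivAt (fun y => Ψ (u * y) + Real.sqrt (u * y) * Θ (u / y))
      (u * deriv Ψ (u * v) + Θ (u / v) * (u / (2 * Real.sqrt (u * v)))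
        - Real.sqrt (u * v) * deriv Θ (u / v) * u / v ^ 2) v := by
  have hA : HasDerivAt (fun y : ℝ => u * y) u v := by
    simpa using (hasDerivAt_id v).const_mul u
  have hB : HasDerivAt (fun y : ℝ => u / y) (-(u / v ^ 2)) v := by
    simpa [div_eq_mul_inv] using (hasDerivAt_inv (ne_of_gt hv)).const_mul u
  have hP : HasDerivAt (fun y => Ψ (u * y)) (deriv Ψ (u * v) * u) v :=
    (hΨ1 _ (by positivity)).comp v hA
  have hs : HasDerivAt (fun y => Real.sqrt (u * y)) (1 / (2 * Real.sqrt (u * v)) * u) v :=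
    (Real.hasDerivAt_sqrt (by positivity)).comp v hA
  have hT : HasDerivAt (fun y => Θ (u / y)) (deriv Θ (u / v) * -(u / v ^ 2)) v :=
    (hΘ1 _ (by positivity)).comp v hB
  have := hP.add (hs.mul hT)
  refine this.congr_deriv ?_
  have hsq : Real.sqrt (u * v) ≠ 0 := by positivity
  field_simp
  ring

lemma hD_Euu (Ψ Θ : ℝ → ℝ)
    (hΘ1 : ∀ x : ℝ, 0 < x → HasDerivAt Θ (deriv Θ x) x)
    (hΨ2 : ∀ x : ℝ, 0 < x → HasDerivAt (deriv Ψ) (deriv (deriv Ψ) x) x)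
    (hΘ2 : ∀ x : ℝ, 0 < x → HasDerivAt (deriv Θ) (deriv (deriv Θ) x) x)
    (u v : ℝ) (hu : 0 < u) (hv : 0 < v) :
    HasDerivAt (fun x => v * deriv Ψ (x * v) + Θ (x / v) * (v / (2 * Real.sqrt (x * v)))
        + Real.sqrt (x * v) * deriv Θ (x / v) / v)
      (v ^ 2 * deriv (deriv Ψ) (u * v) + deriv Θ (u / v) / Real.sqrt (u * v)
        - Θ (u / v) * v ^ 2 / (4 * Real.sqrt (u * v) ^ 3)
        + Real.sqrt (u * v) * deriv (deriv Θ) (u / v) / v ^ 2) u := by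
  have hA : HasDerivAt (fun x : ℝ => x * v) v u := by
    simpa using (hasDerivAt_id u).mul_const v
  have hB : HasDerivAt (fun x : ℝ => x / v) (1 / v) u := by
    simpa using (hasDerivAt_id u).div_const v
  have hs : HasDerivAt (fun x => Real.sqrt (x * v)) (1 / (2 * Real.sqrt (u * v)) * v) u :=
    (Real.hasDerivAt_sqrt (by positivity)).comp u hA
  have hsne : (2 : ℝ) * Real.sqrt (u * v) ≠ 0 := by positivity
  have p1 := ((hΨ2 _ (by positivity)).comp u hA).const_mul v
  have p2 := (((hΘ1 _ (by positivity)).comp u hB).mul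
    ((hasDerivAt_const u v).div (hs.const_mul 2) hsne))
  have p3 := ((hs.mul ((hΘ2 _ (by positivity)).comp u hB)).div_const v)
  have := (p1.add p2).add p3
  refine this.congr_deriv ?_
  simp only [Pi.div_apply, Pi.mul_apply, Function.comp_apply, id_eq]
  have h0 : (0:ℝ) ≤ u * v := by positivity
  have hss : Real.sqrt (u * v) ^ 2 = u * v := Real.sq_sqrt h0
  have hs0 : 0 < Real.sqrt (u * v) := Real.sqrt_pos.mpr (by positivity)
  set s := Real.sqrt (u * v) with hsdef
  have hu2 : u = s ^ 2 / v := by rw [hss]; field_simp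
  rw [hu2]
  have hsne' : s ≠ 0 := ne_of_gt hs0
  field_simp
  ring

lemma hD_Euv (Ψ Θ : ℝ → ℝ)
    (hΨ1 : ∀ x : ℝ, 0 < x → HasDerivAt Ψ (deriv Ψ x) x)
    (hΘ1 : ∀ x : ℝ, 0 < x → HasDerivAt Θ (deriv Θ x) x)
    (hΨ2 : ∀ x : ℝ, 0 < x → HasDerivAt (deriv Ψ) (deriv (deriv Ψ) x) x)
    (hΘ2 : ∀ x : ℝ, 0 < x → HasDerivAt (deriv Θ) (deriv (deriv Θ) x) x)
    (u v : ℝ) (hu : 0 < u) (hv : 0 < v) :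
    HasDerivAt (fun y => y * deriv Ψ (u * y) + Θ (u / y) * (y / (2 * Real.sqrt (u * y)))
        + Real.sqrt (u * y) * deriv Θ (u / y) / y)
      (deriv Ψ (u * v) + u * v * deriv (deriv Ψ) (u * v)
        + Θ (u / v) / (4 * Real.sqrt (u * v))
        - deriv Θ (u / v) * Real.sqrt (u * v) / v ^ 2
        - Real.sqrt (u * v) * u * deriv (deriv Θ) (u / v) / v ^ 3) v := by
  have hA : HasDerivAt (fun y : ℝ => u * y) u v := by
    simpa using (hasDerivAt_id v).const_mul u
  have hB : HasDerivAt (fun y : ℝ => u / y) (-(u / v ^ 2)) v := by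
    simpa [div_eq_mul_inv] using (hasDerivAt_inv (ne_of_gt hv)).const_mul u
  have hs : HasDerivAt (fun y => Real.sqrt (u * y)) (1 / (2 * Real.sqrt (u * v)) * u) v :=
    (Real.hasDerivAt_sqrt (by positivity)).comp v hA
  have hsne : (2 : ℝ) * Real.sqrt (u * v) ≠ 0 := by positivity
  have p1 := (hasDerivAt_id v).mul ((hΨ2 _ (by positivity)).comp v hA)
  have p2 := ((hΘ1 _ (by positivity)).comp v hB).mul
    ((hasDerivAt_id v).div (hs.const_mul 2) hsne)
  have p3 := (hs.mul ((hΘ2 _ (by positivity)).comp v hB)).div (hasDerivAt_id v) (ne_of_gt hv)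
  have := (p1.add p2).add p3
  refine this.congr_deriv ?_
  simp only [Pi.div_apply, Pi.mul_apply, Function.comp_apply, id_eq]
  have h0 : (0:ℝ) ≤ u * v := by positivity
  have hss : Real.sqrt (u * v) ^ 2 = u * v := Real.sq_sqrt h0
  have hs0 : 0 < Real.sqrt (u * v) := Real.sqrt_pos.mpr (by positivity)
  set s := Real.sqrt (u * v) with hsdef
  have hu2 : u = s ^ 2 / v := by rw [hss]; field_simp
  rw [hu2]
  have hsne' : s ≠ 0 := ne_of_gt hs0
  field_simp
  ring

lemma hD_Evu (Ψ Θ : ℝ → ℝ)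
    (hΨ1 : ∀ x : ℝ, 0 < x → HasDerivAt Ψ (deriv Ψ x) x)
    (hΘ1 : ∀ x : ℝ, 0 < x → HasDerivAt Θ (deriv Θ x) x)
    (hΨ2 : ∀ x : ℝ, 0 < x → HasDerivAt (deriv Ψ) (deriv (deriv Ψ) x) x)
    (hΘ2 : ∀ x : ℝ, 0 < x → HasDerivAt (deriv Θ) (deriv (deriv Θ) x) x)
    (u v : ℝ) (hu : 0 < u) (hv : 0 < v) :
    HasDerivAt (fun x => x * deriv Ψ (x * v) + Θ (x / v) * (x / (2 * Real.sqrt (x * v)))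
        - Real.sqrt (x * v) * deriv Θ (x / v) * x / v ^ 2)
      (deriv Ψ (u * v) + u * v * deriv (deriv Ψ) (u * v)
        + Θ (u / v) / (4 * Real.sqrt (u * v))
        - deriv Θ (u / v) * Real.sqrt (u * v) / v ^ 2
        - Real.sqrt (u * v) * u * deriv (deriv Θ) (u / v) / v ^ 3) u := by
  have hA : HasDerivAt (fun x : ℝ => x * v) v u := by
    simpa using (hasDerivAt_id u).mul_const v
  have hB : HasDerivAt (fun x : ℝ => x / v) (1 / v) u := by
    simpa using (hasDerivAt_id u).div_const v
  have hs : HasDerivAt (fun x => Real.sqrt (x * v)) (1 / (2 * Real.sqrt (u * v)) * v) u :=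
    (Real.hasDerivAt_sqrt (by positivity)).comp u hA
  have hsne : (2 : ℝ) * Real.sqrt (u * v) ≠ 0 := by positivity
  have p1 := (hasDerivAt_id u).mul ((hΨ2 _ (by positivity)).comp u hA)
  have p2 := ((hΘ1 _ (by positivity)).comp u hB).mul
    ((hasDerivAt_id u).div (hs.const_mul 2) hsne)
  have p3 := ((hs.mul ((hΘ2 _ (by positivity)).comp u hB)).mul (hasDerivAt_id u)).div_const (v ^ 2)
  have := (p1.add p2).sub p3
  refine this.congr_deriv ?_
  simp only [Pi.div_apply, Pi.mul_apply, Function.comp_apply, id_eq]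
  have h0 : (0:ℝ) ≤ u * v := by positivity
  have hss : Real.sqrt (u * v) ^ 2 = u * v := Real.sq_sqrt h0
  have hs0 : 0 < Real.sqrt (u * v) := Real.sqrt_pos.mpr (by positivity)
  set s := Real.sqrt (u * v) with hsdef
  have hu2 : u = s ^ 2 / v := by rw [hss]; field_simp
  rw [hu2]
  have hsne' : s ≠ 0 := ne_of_gt hs0
  field_simp
  ring

lemma hD_Evv (Ψ Θ : ℝ → ℝ)
    (hΨ1 : ∀ x : ℝ, 0 < x → HasDerivAt Ψ (deriv Ψ x) x)
    (hΘ1 : ∀ x : ℝ, 0 < x → HasDerivAt Θ (deriv Θ x) x)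
    (hΨ2 : ∀ x : ℝ, 0 < x → HasDerivAt (deriv Ψ) (deriv (deriv Ψ) x) x)
    (hΘ2 : ∀ x : ℝ, 0 < x → HasDerivAt (deriv Θ) (deriv (deriv Θ) x) x)
    (u v : ℝ) (hu : 0 < u) (hv : 0 < v) :
    HasDerivAt (fun y => u * deriv Ψ (u * y) + Θ (u / y) * (u / (2 * Real.sqrt (u * y)))
        - Real.sqrt (u * y) * deriv Θ (u / y) * u / y ^ 2)
      (u ^ 2 * deriv (deriv Ψ) (u * v)
        - Θ (u / v) * u ^ 2 / (4 * Real.sqrt (u * v) ^ 3)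
        + deriv Θ (u / v) * Real.sqrt (u * v) ^ 3 / v ^ 4
        + Real.sqrt (u * v) * u ^ 2 * deriv (deriv Θ) (u / v) / v ^ 4) v := by
  have hA : HasDerivAt (fun y : ℝ => u * y) u v := by
    simpa using (hasDerivAt_id v).const_mul u
  have hB : HasDerivAt (fun y : ℝ => u / y) (-(u / v ^ 2)) v := by
    simpa [div_eq_mul_inv] using (hasDerivAt_inv (ne_of_gt hv)).const_mul u
  have hs : HasDerivAt (fun y => Real.sqrt (u * y)) (1 / (2 * Real.sqrt (u * v)) * u) v :=
    (Real.hasDerivAt_sqrt (by positivity)).comp v hA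
  have hsne : (2 : ℝ) * Real.sqrt (u * v) ≠ 0 := by positivity
  have hy2 : HasDerivAt (fun y : ℝ => y ^ 2) (2 * v) v := by
    simpa using hasDerivAt_pow 2 v
  have p1 := ((hΨ2 _ (by positivity)).comp v hA).const_mul u
  have p2 := ((hΘ1 _ (by positivity)).comp v hB).mul
    ((hasDerivAt_const v u).div (hs.const_mul 2) hsne)
  have p3 := ((hs.mul ((hΘ2 _ (by positivity)).comp v hB)).mul_const u).div hy2
    (by positivity)
  have := (p1.add p2).sub p3
  refine this.congr_deriv ?_
  simp only [Pi.div_apply, Pi.mul_apply, Function.comp_apply, id_eq]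
  have h0 : (0:ℝ) ≤ u * v := by positivity
  have hss : Real.sqrt (u * v) ^ 2 = u * v := Real.sq_sqrt h0
  have hs0 : 0 < Real.sqrt (u * v) := Real.sqrt_pos.mpr (by positivity)
  set s := Real.sqrt (u * v) with hsdef
  have hu2 : u = s ^ 2 / v := by rw [hss]; field_simp
  rw [hu2]
  have hsne' : s ≠ 0 := ne_of_gt hs0
  field_simp
  ring

lemma quad1 (P1 P2 Th T1 T2 u v s : ℝ) (hv : 0 < v) (hs : 0 < s) (hsu : s ^ 2 = u * v) :
    (-u) * ((v ^ 2 * P2 + T1 / s - Th * v ^ 2 / (4 * s ^ 3) + s * T2 / v ^ 2) * (-u)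
        + (P1 + u * v * P2 + Th / (4 * s) - T1 * s / v ^ 2 - s * u * T2 / v ^ 3) * v)
      + v * ((P1 + u * v * P2 + Th / (4 * s) - T1 * s / v ^ 2 - s * u * T2 / v ^ 3) * (-u)
        + (u ^ 2 * P2 - Th * u ^ 2 / (4 * s ^ 3) + T1 * s ^ 3 / v ^ 4 + s * u ^ 2 * T2 / v ^ 4) * v)
    = -2 * (u * v) * P1 + s * (4 * (u / v) ^ 2 * T2 + 4 * (u / v) * T1 - Th) := by
  have hu2 : u = s ^ 2 / v := by rw [hsu]; field_simp
  rw [hu2]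
  have hsne : s ≠ 0 := ne_of_gt hs
  field_simp
  ring

lemma quad2 (P1 P2 Th T1 T2 u v s : ℝ) (hv : 0 < v) (hs : 0 < s) (hsu : s ^ 2 = u * v) :
    u * ((v ^ 2 * P2 + T1 / s - Th * v ^ 2 / (4 * s ^ 3) + s * T2 / v ^ 2) * u
        + (P1 + u * v * P2 + Th / (4 * s) - T1 * s / v ^ 2 - s * u * T2 / v ^ 3) * v)
      + v * ((P1 + u * v * P2 + Th / (4 * s) - T1 * s / v ^ 2 - s * u * T2 / v ^ 3) * u
        + (u ^ 2 * P2 - Th * u ^ 2 / (4 * s ^ 3) + T1 * s ^ 3 / v ^ 4 + s * u ^ 2 * T2 / v ^ 4) * v)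
    = 2 * (u * v) * (2 * (u * v) * P2 + P1) := by
  have hu2 : u = s ^ 2 / v := by rw [hsu]; field_simp
  rw [hu2]
  have hsne : s ≠ 0 := ne_of_gt hs
  field_simp
  ring

theorem quadratic_forms_positive (Ψ Θ : ℝ → ℝ)
    (hΨ : ContDiffOn ℝ 2 Ψ (Set.Ioi 0))
    (hΘ : ContDiffOn ℝ 2 Θ (Set.Ioi 0))
    (hΨ' : ∀ r : ℝ, 0 < r → deriv Ψ r < 0)
    (hΨ'' : ∀ r : ℝ, 0 < r → 0 < deriv (deriv Ψ) r)
    (hΨc : ∀ r : ℝ, 0 < r → 0 < 2 * r * deriv (deriv Ψ) r + deriv Ψ r)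
    (hΘc : ∀ ξ : ℝ, 0 < ξ →
      0 ≤ 4 * ξ ^ 2 * deriv (deriv Θ) ξ + 4 * ξ * deriv Θ ξ - Θ ξ)
    (E : ℝ → ℝ → ℝ)
    (hE : ∀ u v, E u v = Ψ (u * v) + Real.sqrt (u * v) * Θ (u / v)) :
    ∀ u v : ℝ, 0 < u → 0 < v →
      0 < ![-u, v] ⬝ᵥ (hess E u v).mulVec ![-u, v] ∧
      0 < ![u, v] ⬝ᵥ (hess E u v).mulVec ![u, v] := by
  obtain ⟨hΨ1, hΨ2⟩ := derivs_of_C2 Ψ hΨ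
  obtain ⟨hΘ1, hΘ2⟩ := derivs_of_C2 Θ hΘ
  intro u v hu hv
  -- first partial derivatives
  have h_pdu : ∀ x y : ℝ, 0 < x → 0 < y → pdu E x y =
      y * deriv Ψ (x * y) + Θ (x / y) * (y / (2 * Real.sqrt (x * y)))
        + Real.sqrt (x * y) * deriv Θ (x / y) / y := by
    intro x y hx hy
    have hfe : (fun t => E t y) = fun t => Ψ (t * y) + Real.sqrt (t * y) * Θ (t / y) :=
      funext fun t => hE t y
    rw [pdu, hfe]
    exact (hD_Eu Ψ Θ hΨ1 hΘ1 x y hx hy).deriv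
  have h_pdv : ∀ x y : ℝ, 0 < x → 0 < y → pdv E x y =
      x * deriv Ψ (x * y) + Θ (x / y) * (x / (2 * Real.sqrt (x * y)))
        - Real.sqrt (x * y) * deriv Θ (x / y) * x / y ^ 2 := by
    intro x y hx hy
    have hfe : (fun t => E x t) = fun t => Ψ (x * t) + Real.sqrt (x * t) * Θ (x / t) :=
      funext fun t => hE x t
    rw [pdv, hfe]
    exact (hD_Ev Ψ Θ hΨ1 hΘ1 x y hx hy).deriv
  -- second partial derivatives
  have huu : pdu (pdu E) u v =
      v ^ 2 * deriv (deriv Ψ) (u * v) + deriv Θ (u / v) / Real.sqrt (u * v)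
        - Θ (u / v) * v ^ 2 / (4 * Real.sqrt (u * v) ^ 3)
        + Real.sqrt (u * v) * deriv (deriv Θ) (u / v) / v ^ 2 := by
    rw [pdu]
    have heq : (fun x => pdu E x v) =ᶠ[nhds u] fun x =>
        v * deriv Ψ (x * v) + Θ (x / v) * (v / (2 * Real.sqrt (x * v)))
          + Real.sqrt (x * v) * deriv Θ (x / v) / v :=
      Filter.eventually_of_mem (isOpen_Ioi.mem_nhds hu) fun x hx => h_pdu x v hx hv
    rw [heq.deriv_eq]
    exact (hD_Euu Ψ Θ hΘ1 hΨ2 hΘ2 u v hu hv).deriv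
  have huv : pdv (pdu E) u v =
      deriv Ψ (u * v) + u * v * deriv (deriv Ψ) (u * v)
        + Θ (u / v) / (4 * Real.sqrt (u * v))
        - deriv Θ (u / v) * Real.sqrt (u * v) / v ^ 2
        - Real.sqrt (u * v) * u * deriv (deriv Θ) (u / v) / v ^ 3 := by
    rw [pdv]
    have heq : (fun y => pdu E u y) =ᶠ[nhds v] fun y =>
        y * deriv Ψ (u * y) + Θ (u / y) * (y / (2 * Real.sqrt (u * y)))
          + Real.sqrt (u * y) * deriv Θ (u / y) / y :=
      Filter.eventually_of_mem (isOpen_Ioi.mem_nhds hv) fun y hy => h_pdu u y hu hy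
    rw [heq.deriv_eq]
    exact (hD_Euv Ψ Θ hΨ1 hΘ1 hΨ2 hΘ2 u v hu hv).deriv
  have hvu : pdu (pdv E) u v =
      deriv Ψ (u * v) + u * v * deriv (deriv Ψ) (u * v)
        + Θ (u / v) / (4 * Real.sqrt (u * v))
        - deriv Θ (u / v) * Real.sqrt (u * v) / v ^ 2
        - Real.sqrt (u * v) * u * deriv (deriv Θ) (u / v) / v ^ 3 := by
    rw [pdu]
    have heq : (fun x => pdv E x v) =ᶠ[nhds u] fun x =>
        x * deriv Ψ (x * v) + Θ (x / v) * (x / (2 * Real.sqrt (x * v)))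
          - Real.sqrt (x * v) * deriv Θ (x / v) * x / v ^ 2 :=
      Filter.eventually_of_mem (isOpen_Ioi.mem_nhds hu) fun x hx => h_pdv x v hx hv
    rw [heq.deriv_eq]
    exact (hD_Evu Ψ Θ hΨ1 hΘ1 hΨ2 hΘ2 u v hu hv).deriv
  have hvv : pdv (pdv E) u v =
      u ^ 2 * deriv (deriv Ψ) (u * v)
        - Θ (u / v) * u ^ 2 / (4 * Real.sqrt (u * v) ^ 3)
        + deriv Θ (u / v) * Real.sqrt (u * v) ^ 3 / v ^ 4
        + Real.sqrt (u * v) * u ^ 2 * deriv (deriv Θ) (u / v) / v ^ 4 := by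
    rw [pdv]
    have heq : (fun y => pdv E u y) =ᶠ[nhds v] fun y =>
        u * deriv Ψ (u * y) + Θ (u / y) * (u / (2 * Real.sqrt (u * y)))
          - Real.sqrt (u * y) * deriv Θ (u / y) * u / y ^ 2 :=
      Filter.eventually_of_mem (isOpen_Ioi.mem_nhds hv) fun y hy => h_pdv u y hu hy
    rw [heq.deriv_eq]
    exact (hD_Evv Ψ Θ hΨ1 hΘ1 hΨ2 hΘ2 u v hu hv).deriv
  -- abbreviations
  have h0 : (0:ℝ) ≤ u * v := by positivity
  have hss : Real.sqrt (u * v) ^ 2 = u * v := Real.sq_sqrt h0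
  have hs0 : 0 < Real.sqrt (u * v) := Real.sqrt_pos.mpr (by positivity)
  have hr : 0 < u * v := by positivity
  have hxi : 0 < u / v := by positivity
  constructor
  · have expand : ![-u, v] ⬝ᵥ (hess E u v).mulVec ![-u, v] =
        (-u) * (pdu (pdu E) u v * (-u) + pdv (pdu E) u v * v)
          + v * (pdu (pdv E) u v * (-u) + pdv (pdv E) u v * v) := by
      simp [hess, Matrix.mulVec, dotProduct, Fin.sum_univ_two]
    rw [expand, huu, huv, hvu, hvv,
      quad1 (deriv Ψ (u * v)) (deriv (deriv Ψ) (u * v)) (Θ (u / v)) (deriv Θ (u / v))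
        (deriv (deriv Θ) (u / v)) u v (Real.sqrt (u * v)) hv hs0 hss]
    have h1 : 0 < -2 * (u * v) * deriv Ψ (u * v) := by
      have := hΨ' (u * v) hr
      nlinarith
    have h2 : 0 ≤ Real.sqrt (u * v) *
        (4 * (u / v) ^ 2 * deriv (deriv Θ) (u / v)
          + 4 * (u / v) * deriv Θ (u / v) - Θ (u / v)) :=
      mul_nonneg (le_of_lt hs0) (hΘc _ hxi)
    linarith
  · have expand : ![u, v] ⬝ᵥ (hess E u v).mulVec ![u, v] =
        u * (pdu (pdu E) u v * u + pdv (pdu E) u v * v)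
          + v * (pdu (pdv E) u v * u + pdv (pdv E) u v * v) := by
      simp [hess, Matrix.mulVec, dotProduct, Fin.sum_univ_two]
    rw [expand, huu, huv, hvu, hvv,
      quad2 (deriv Ψ (u * v)) (deriv (deriv Ψ) (u * v)) (Θ (u / v)) (deriv Θ (u / v))
        (deriv (deriv Θ) (u / v)) u v (Real.sqrt (u * v)) hv hs0 hss]
    have := hΨc (u * v) hr
    nlinarith
end

section
/- The pair (E, Q) with E(u,v) = Ψ(r) + √r·Θ(ξ) + K and Q(u,v) = ∫_{m²}^{r} Ψ'(s)(φ(s) + 2sφ'(s)) ds + φ(r)·√r·Θ(ξ) (where r = uv, ξ = u/v) satisfies the entropy compatibility condition (∇E)ᵀ·DF = (∇Q)ᵀ, where DF = [[φ(r)+rφ'(r), u²φ'(r)], [v²φ'(r), φ(r)+rφ'(r)]], at every point with u, v > 0. -/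
open Real Matrix intervalIntegral

theorem entropy_flux_compatibility (φ Ψ Θ : ℝ → ℝ) (K m : ℝ) (hm : 0 < m)
    (hφ : ContDiff ℝ 1 φ)
    (hΨ : ContDiffOn ℝ 1 Ψ (Set.Ioi 0))
    (hΘ : ContDiffOn ℝ 1 Θ (Set.Ioi 0))
    (E Q : ℝ → ℝ → ℝ)
    (hE : ∀ u v, E u v = Ψ (u * v) + Real.sqrt (u * v) * Θ (u / v) + K)
    (hQ : ∀ u v, Q u v
      = (∫ s in (m ^ 2)..(u * v), deriv Ψ s * (φ s + 2 * s * deriv φ s))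
        + φ (u * v) * Real.sqrt (u * v) * Θ (u / v)) :
    ∀ u v : ℝ, 0 < u → 0 < v →
      pdu E u v * (φ (u * v) + (u * v) * deriv φ (u * v))
          + pdv E u v * (v ^ 2 * deriv φ (u * v)) = pdu Q u v ∧
      pdu E u v * (u ^ 2 * deriv φ (u * v))
          + pdv E u v * (φ (u * v) + (u * v) * deriv φ (u * v)) = pdv Q u v := by
  intro u v hu hv
  have hr : (0:ℝ) < u * v := mul_pos hu hv
  have hξ : (0:ℝ) < u / v := div_pos hu hv
  set r := u * v with hrdef
  set ξ := u / v with hξdef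
  set S := Real.sqrt r with hSdef
  have hS : 0 < S := Real.sqrt_pos.mpr hr
  have hS2 : S * S = r := Real.mul_self_sqrt hr.le
  -- basic derivative facts
  have hΨd : HasDerivAt Ψ (deriv Ψ r) r :=
    (((hΨ.differentiableOn one_ne_zero).differentiableAt (isOpen_Ioi.mem_nhds hr)).hasDerivAt)
  have hΘd : HasDerivAt Θ (deriv Θ ξ) ξ :=
    (((hΘ.differentiableOn one_ne_zero).differentiableAt (isOpen_Ioi.mem_nhds hξ)).hasDerivAt)
  have hφd : HasDerivAt φ (deriv φ r) r := (hφ.differentiable one_ne_zero r).hasDerivAt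
  have hsq : HasDerivAt Real.sqrt (1 / (2 * S)) r := Real.hasDerivAt_sqrt hr.ne'
  -- inner maps
  have hmulu : HasDerivAt (fun x : ℝ => x * v) v u := hasDerivAt_mul_const v
  have hdivu : HasDerivAt (fun x : ℝ => x / v) (1 / v) u := by
    simpa using (hasDerivAt_id u).div_const v
  have hmulv : HasDerivAt (fun y : ℝ => u * y) u v := by
    simpa using (hasDerivAt_id v).const_mul u
  have hdivv : HasDerivAt (fun y : ℝ => u / y) (-(u / v ^ 2)) v := by
    have := (hasDerivAt_inv hv.ne').const_mul u
    simpa [div_eq_mul_inv, mul_comm, neg_div] using this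
  -- FTC part
  set f : ℝ → ℝ := fun s => deriv Ψ s * (φ s + 2 * s * deriv φ s) with hfdef
  have hΨ'c : ContinuousOn (deriv Ψ) (Set.Ioi 0) :=
    hΨ.continuousOn_deriv_of_isOpen isOpen_Ioi le_rfl
  have hfc : ContinuousOn f (Set.Ioi 0) :=
    hΨ'c.mul ((hφ.continuous.add
      ((continuous_const.mul continuous_id).mul (hφ.continuous_deriv le_rfl))).continuousOn)
  have hsub : Set.uIcc (m ^ 2) r ⊆ Set.Ioi 0 := by
    intro x hx
    have h1 : min (m ^ 2) r ≤ x := hx.1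
    have : (0:ℝ) < min (m ^ 2) r := lt_min (pow_pos hm 2) hr
    exact lt_of_lt_of_le this h1
  have hint : IntervalIntegrable f MeasureTheory.volume (m ^ 2) r :=
    (hfc.mono hsub).intervalIntegrable
  have hmeas : StronglyMeasurableAtFilter f (nhds r) MeasureTheory.volume :=
    hfc.stronglyMeasurableAtFilter isOpen_Ioi r hr
  have hG : HasDerivAt (fun t => ∫ s in (m ^ 2)..t, f s) (f r) r :=
    intervalIntegral.integral_hasDerivAt_right hint hmeas (hfc.continuousAt (isOpen_Ioi.mem_nhds hr))
  -- derivatives of E and Q in each variable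
  have hEu : HasDerivAt (fun x => E x v)
      (deriv Ψ r * v + ((1 / (2 * S) * v) * Θ ξ + S * (deriv Θ ξ * (1 / v)))) u := by
    have : HasDerivAt (fun x => Ψ (x * v) + Real.sqrt (x * v) * Θ (x / v) + K)
        (deriv Ψ r * v + ((1 / (2 * S) * v) * Θ ξ + S * (deriv Θ ξ * (1 / v)))) u :=
      (((hΨd.comp u hmulu).add
        ((hsq.comp u hmulu).mul (hΘd.comp u hdivu))).add_const K)
    have heq : (fun x => E x v) = fun x => Ψ (x * v) + Real.sqrt (x * v) * Θ (x / v) + K := by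
      funext x; exact hE x v
    rw [heq]; exact this
  have hEv : HasDerivAt (fun y => E u y)
      (deriv Ψ r * u + ((1 / (2 * S) * u) * Θ ξ + S * (deriv Θ ξ * -(u / v ^ 2)))) v := by
    have : HasDerivAt (fun y => Ψ (u * y) + Real.sqrt (u * y) * Θ (u / y) + K)
        (deriv Ψ r * u + ((1 / (2 * S) * u) * Θ ξ + S * (deriv Θ ξ * -(u / v ^ 2)))) v :=
      (((hΨd.comp v hmulv).add
        ((hsq.comp v hmulv).mul (hΘd.comp v hdivv))).add_const K)
    have heq : (fun y => E u y) = fun y => Ψ (u * y) + Real.sqrt (u * y) * Θ (u / y) + K := by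
      funext y; exact hE u y
    rw [heq]; exact this
  have hQu : HasDerivAt (fun x => Q x v)
      (f r * v + (((deriv φ r * v) * S + φ r * (1 / (2 * S) * v)) * Θ ξ
        + (φ r * S) * (deriv Θ ξ * (1 / v)))) u := by
    have : HasDerivAt
        (fun x => (∫ s in (m ^ 2)..(x * v), f s) + φ (x * v) * Real.sqrt (x * v) * Θ (x / v))
        (f r * v + (((deriv φ r * v) * S + φ r * (1 / (2 * S) * v)) * Θ ξ
          + (φ r * S) * (deriv Θ ξ * (1 / v)))) u := by
      have h := ((hG.comp u hmulu).add
        (((hφd.comp u hmulu).mul (hsq.comp u hmulu)).mul (hΘd.comp u hdivu)))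
      exact h
    have heq : (fun x => Q x v)
        = fun x => (∫ s in (m ^ 2)..(x * v), f s) + φ (x * v) * Real.sqrt (x * v) * Θ (x / v) := by
      funext x; exact hQ x v
    rw [heq]; exact this
  have hQv : HasDerivAt (fun y => Q u y)
      (f r * u + (((deriv φ r * u) * S + φ r * (1 / (2 * S) * u)) * Θ ξ
        + (φ r * S) * (deriv Θ ξ * -(u / v ^ 2)))) v := by
    have : HasDerivAt
        (fun y => (∫ s in (m ^ 2)..(u * y), f s) + φ (u * y) * Real.sqrt (u * y) * Θ (u / y))
        (f r * u + (((deriv φ r * u) * S + φ r * (1 / (2 * S) * u)) * Θ ξ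
          + (φ r * S) * (deriv Θ ξ * -(u / v ^ 2)))) v :=
      ((hG.comp v hmulv).add
        (((hφd.comp v hmulv).mul (hsq.comp v hmulv)).mul (hΘd.comp v hdivv)))
    have heq : (fun y => Q u y)
        = fun y => (∫ s in (m ^ 2)..(u * y), f s) + φ (u * y) * Real.sqrt (u * y) * Θ (u / y) := by
      funext y; exact hQ u y
    rw [heq]; exact this
  rw [pdu, pdv, pdu, pdv, hEu.deriv, hEv.deriv, hQu.deriv, hQv.deriv, hfdef]
  constructor
  · field_simp
    linear_combination (-2 * v ^ 2 * Θ ξ * deriv φ r) * (hS2.trans hrdef)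
  · field_simp
    linear_combination (-2 * v ^ 2 * Θ ξ * deriv φ r) * (hS2.trans hrdef)
end

section
/- For the entropy E_{k,p}(u,v) = (uv)^(-k) + u^(p+1/2)·v^(1/2−p) and the diffusion matrix B(u,v) = [[1, u/v], [v/u, 1]], for any vector U_x = (u_x, v_x) one has U_xᵀ·(∇²E_{k,p})·B·U_x = k(2k+1)·(uv)^(-k-2)·(v·u_x + u·v_x)²; i.e., the contribution of the term u^(p+1/2)·v^(1/2−p) vanishes. -/
open Real Matrix

theorem diffusion_entropy_dissipation_full (k p : ℝ) (hk : 0 < k) (hp : 1 / 2 ≤ p)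
    (u v ux vx : ℝ) (hu : 0 < u) (hv : 0 < v)
    (B : Matrix (Fin 2) (Fin 2) ℝ) (hB : B = !![1, u / v; v / u, 1])
    (Ekp : ℝ → ℝ → ℝ)
    (hEkp : ∀ a b, Ekp a b = (a * b) ^ (-k) + a ^ (p + 1 / 2) * b ^ (1 / 2 - p)) :
    ![ux, vx] ⬝ᵥ (hess Ekp u v).mulVec (B.mulVec ![ux, vx])
      = k * (2 * k + 1) * (u * v) ^ (-k - 2) * (v * ux + u * vx) ^ 2 := by
  have huv : (0:ℝ) < u * v := mul_pos hu hv
  -- first partial derivatives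
  have key1 : ∀ x y : ℝ, 0 < x → 0 < y →
      pdu Ekp x y = -k * (x*y)^(-k-1) * y + (p+1/2) * x^(p+1/2-1) * y^(1/2-p) := by
    intro x y hx hy
    have hxy : (0:ℝ) < x*y := mul_pos hx hy
    have hinner : HasDerivAt (fun a : ℝ => a * y) y x := by
      simpa using (hasDerivAt_id x).mul_const y
    have h1 : HasDerivAt (fun a : ℝ => (a*y)^(-k)) (-k * (x*y)^(-k-1) * y) x :=
      by have h := (Real.hasDerivAt_rpow_const (x := x*y) (p := -k) (Or.inl hxy.ne')).comp x hinner; exact h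
    have h2 : HasDerivAt (fun a : ℝ => a^(p+1/2) * y^(1/2-p))
        ((p+1/2) * x^(p+1/2-1) * y^(1/2-p)) x :=
      (Real.hasDerivAt_rpow_const (p := p+1/2) (Or.inl hx.ne')).mul_const _
    have hfun : (fun a => Ekp a y) = fun a => (a*y)^(-k) + a^(p+1/2)*y^(1/2-p) :=
      funext fun a => hEkp a y
    rw [pdu, hfun]
    exact (h1.add h2).deriv
  have key2 : ∀ x y : ℝ, 0 < x → 0 < y →
      pdv Ekp x y = -k * (x*y)^(-k-1) * x + x^(p+1/2) * ((1/2-p) * y^(1/2-p-1)) := by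
    intro x y hx hy
    have hxy : (0:ℝ) < x*y := mul_pos hx hy
    have hinner : HasDerivAt (fun b : ℝ => x * b) x y := by
      simpa using (hasDerivAt_id y).const_mul x
    have h1 : HasDerivAt (fun b : ℝ => (x*b)^(-k)) (-k * (x*y)^(-k-1) * x) y :=
      (Real.hasDerivAt_rpow_const (p := -k) (Or.inl hxy.ne')).comp y hinner
    have h2 : HasDerivAt (fun b : ℝ => x^(p+1/2) * b^(1/2-p))
        (x^(p+1/2) * ((1/2-p) * y^(1/2-p-1))) y :=
      (Real.hasDerivAt_rpow_const (p := 1/2-p) (Or.inl hy.ne')).const_mul _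
    have hfun : (fun b => Ekp x b) = fun b => (x*b)^(-k) + x^(p+1/2)*b^(1/2-p) :=
      funext fun b => hEkp x b
    rw [pdv, hfun]
    exact (h1.add h2).deriv
  -- second partial derivatives
  have hev1 : (fun x => pdu Ekp x v)
      =ᶠ[nhds u] (fun x => -k * (x*v)^(-k-1) * v + (p+1/2) * x^(p+1/2-1) * v^(1/2-p)) := by
    filter_upwards [eventually_gt_nhds hu] with x hx using key1 x v hx hv
  have hev2 : (fun y => pdu Ekp u y)
      =ᶠ[nhds v] (fun y => -k * (u*y)^(-k-1) * y + (p+1/2) * u^(p+1/2-1) * y^(1/2-p)) := by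
    filter_upwards [eventually_gt_nhds hv] with y hy using key1 u y hu hy
  have hev3 : (fun x => pdv Ekp x v)
      =ᶠ[nhds u] (fun x => -k * (x*v)^(-k-1) * x + x^(p+1/2) * ((1/2-p) * v^(1/2-p-1))) := by
    filter_upwards [eventually_gt_nhds hu] with x hx using key2 x v hx hv
  have hev4 : (fun y => pdv Ekp u y)
      =ᶠ[nhds v] (fun y => -k * (u*y)^(-k-1) * u + u^(p+1/2) * ((1/2-p) * y^(1/2-p-1))) := by
    filter_upwards [eventually_gt_nhds hv] with y hy using key2 u y hu hy
  have hinnerx : HasDerivAt (fun a : ℝ => a * v) v u := by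
    simpa using (hasDerivAt_id u).mul_const v
  have hinnery : HasDerivAt (fun b : ℝ => u * b) u v := by
    simpa using (hasDerivAt_id v).const_mul u
  have hbase_x : HasDerivAt (fun a : ℝ => (a*v)^(-k-1)) ((-k-1) * (u*v)^(-k-1-1) * v) u :=
    by have h := (Real.hasDerivAt_rpow_const (x := u*v) (p := -k-1) (Or.inl huv.ne')).comp u hinnerx; exact h
  have hbase_y : HasDerivAt (fun b : ℝ => (u*b)^(-k-1)) ((-k-1) * (u*v)^(-k-1-1) * u) v :=
    (Real.hasDerivAt_rpow_const (p := -k-1) (Or.inl huv.ne')).comp v hinnery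
  have hD11 : pdu (pdu Ekp) u v
      = -k * ((-k-1) * (u*v)^(-k-1-1) * v) * v
        + (p+1/2) * ((p+1/2-1) * u^(p+1/2-1-1)) * v^(1/2-p) := by
    rw [pdu, hev1.deriv_eq]
    have h1 : HasDerivAt (fun x : ℝ => -k * (x*v)^(-k-1) * v)
        (-k * ((-k-1) * (u*v)^(-k-1-1) * v) * v) u :=
      (hbase_x.const_mul (-k)).mul_const v
    have h2 : HasDerivAt (fun x : ℝ => (p+1/2) * x^(p+1/2-1) * v^(1/2-p))
        ((p+1/2) * ((p+1/2-1) * u^(p+1/2-1-1)) * v^(1/2-p)) u :=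
      (((Real.hasDerivAt_rpow_const (p := p+1/2-1) (Or.inl hu.ne')).const_mul
        (p+1/2)).mul_const (v^(1/2-p)))
    exact (h1.add h2).deriv
  have hD12 : pdv (pdu Ekp) u v
      = (-k * ((-k-1) * (u*v)^(-k-1-1) * u) * v + (-k * (u*v)^(-k-1)) * 1)
        + ((p+1/2) * u^(p+1/2-1)) * ((1/2-p) * v^(1/2-p-1)) := by
    rw [pdv, hev2.deriv_eq]
    have h1 : HasDerivAt (fun y : ℝ => -k * (u*y)^(-k-1) * y)
        (-k * ((-k-1) * (u*v)^(-k-1-1) * u) * v + (-k * (u*v)^(-k-1)) * 1) v :=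
      (hbase_y.const_mul (-k)).mul (hasDerivAt_id v)
    have h2 : HasDerivAt (fun y : ℝ => (p+1/2) * u^(p+1/2-1) * y^(1/2-p))
        (((p+1/2) * u^(p+1/2-1)) * ((1/2-p) * v^(1/2-p-1))) v :=
      (Real.hasDerivAt_rpow_const (p := 1/2-p) (Or.inl hv.ne')).const_mul _
    exact (h1.add h2).deriv
  have hD21 : pdu (pdv Ekp) u v
      = (-k * ((-k-1) * (u*v)^(-k-1-1) * v) * u + (-k * (u*v)^(-k-1)) * 1)
        + ((p+1/2) * u^(p+1/2-1)) * ((1/2-p) * v^(1/2-p-1)) := by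
    rw [pdu, hev3.deriv_eq]
    have h1 : HasDerivAt (fun x : ℝ => -k * (x*v)^(-k-1) * x)
        (-k * ((-k-1) * (u*v)^(-k-1-1) * v) * u + (-k * (u*v)^(-k-1)) * 1) u :=
      (hbase_x.const_mul (-k)).mul (hasDerivAt_id u)
    have h2 : HasDerivAt (fun x : ℝ => x^(p+1/2) * ((1/2-p) * v^(1/2-p-1)))
        (((p+1/2) * u^(p+1/2-1)) * ((1/2-p) * v^(1/2-p-1))) u :=
      (Real.hasDerivAt_rpow_const (p := p+1/2) (Or.inl hu.ne')).mul_const _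
    exact (h1.add h2).deriv
  have hD22 : pdv (pdv Ekp) u v
      = -k * ((-k-1) * (u*v)^(-k-1-1) * u) * u
        + u^(p+1/2) * ((1/2-p) * ((1/2-p-1) * v^(1/2-p-1-1))) := by
    rw [pdv, hev4.deriv_eq]
    have h1 : HasDerivAt (fun y : ℝ => -k * (u*y)^(-k-1) * u)
        (-k * ((-k-1) * (u*v)^(-k-1-1) * u) * u) v :=
      (hbase_y.const_mul (-k)).mul_const u
    have h2 : HasDerivAt (fun y : ℝ => u^(p+1/2) * ((1/2-p) * y^(1/2-p-1)))
        (u^(p+1/2) * ((1/2-p) * ((1/2-p-1) * v^(1/2-p-1-1)))) v :=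
      (((Real.hasDerivAt_rpow_const (p := 1/2-p-1) (Or.inl hv.ne')).const_mul
        (1/2-p)).const_mul (u^(p+1/2)))
    exact (h1.add h2).deriv
  -- rewrite rpow exponents
  have eA : (u*v)^(-k-1-1) = (u*v)^(-k-2) := by rw [show -k-1-1 = -k-2 from by ring]
  have eA2 : (u*v)^(-k-1) = (u*v)^(-k-2) * (u*v) := by
    rw [show -k-1 = (-k-2)+1 from by ring, Real.rpow_add huv, Real.rpow_one]
  have eU1 : u^(p+1/2-1) = u^(p+1/2) / u := by
    rw [show p+1/2-1 = (p+1/2)-1 from by ring, Real.rpow_sub hu, Real.rpow_one]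
  have eU2 : u^(p+1/2-1-1) = u^(p+1/2) / u / u := by
    rw [show p+1/2-1-1 = (p+1/2-1)-1 from by ring, Real.rpow_sub hu, Real.rpow_one, eU1]
  have eV1 : v^(1/2-p-1) = v^(1/2-p) / v := by
    rw [show 1/2-p-1 = (1/2-p)-1 from by ring, Real.rpow_sub hv, Real.rpow_one]
  have eV2 : v^(1/2-p-1-1) = v^(1/2-p) / v / v := by
    rw [show 1/2-p-1-1 = (1/2-p-1)-1 from by ring, Real.rpow_sub hv, Real.rpow_one, eV1]
  simp only [hess, hD11, hD12, hD21, hD22, hB, eA, eA2, eU1, eU2, eV1, eV2]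
  simp only [Matrix.mulVec, dotProduct, Fin.sum_univ_two, Matrix.cons_val',
    Matrix.cons_val_zero, Matrix.cons_val_one, Matrix.head_cons, Matrix.empty_val',
    Matrix.cons_val_fin_one, Matrix.head_fin_const, Matrix.of_apply]
  field_simp
  ring
end

section
/- Let u, v be C^{2,1} positive functions solving u_t + (u·φ(uv))_x = ε·((uv)_x / v)_x and v_t + (v·φ(uv))_x = ε·((uv)_x / u)_x. Then r = uv satisfies r_t + (φ(r) + 2r·φ'(r))·r_x = ε·(2·r_xx − (r_x)²/r), and ξ = u/v satisfies ξ_t + (φ(r) − ε·r_x/r)·ξ_x = 0, pointwise. -/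
open Real Set

noncomputable def pdx (f : ℝ → ℝ → ℝ) (x t : ℝ) : ℝ := deriv (fun y => f y t) x
noncomputable def pdt (f : ℝ → ℝ → ℝ) (x t : ℝ) : ℝ := deriv (fun s => f x s) t

theorem riemann_invariant_equations (ε T : ℝ) (hε : 0 < ε) (hT : 0 < T)
    (φ : ℝ → ℝ) (hφ : ContDiff ℝ 1 φ)
    (u v : ℝ → ℝ → ℝ)
    (hupos : ∀ x t, t ∈ Ioo 0 T → 0 < u x t)
    (hvpos : ∀ x t, t ∈ Ioo 0 T → 0 < v x t)
    (hux : ∀ t ∈ Ioo 0 T, ContDiff ℝ 2 (fun x => u x t))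
    (hvx : ∀ t ∈ Ioo 0 T, ContDiff ℝ 2 (fun x => v x t))
    (hut : ∀ x : ℝ, ContDiffOn ℝ 1 (fun s => u x s) (Ioo 0 T))
    (hvt : ∀ x : ℝ, ContDiffOn ℝ 1 (fun s => v x s) (Ioo 0 T))
    (hpde1 : ∀ x : ℝ, ∀ t ∈ Ioo 0 T,
      pdt u x t + pdx (fun x t => u x t * φ (u x t * v x t)) x t
        = ε * pdx (fun x t => pdx (fun y s => u y s * v y s) x t / v x t) x t)
    (hpde2 : ∀ x : ℝ, ∀ t ∈ Ioo 0 T,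
      pdt v x t + pdx (fun x t => v x t * φ (u x t * v x t)) x t
        = ε * pdx (fun x t => pdx (fun y s => u y s * v y s) x t / u x t) x t)
    (r ξ : ℝ → ℝ → ℝ)
    (hr : ∀ x t, r x t = u x t * v x t)
    (hξ : ∀ x t, ξ x t = u x t / v x t) :
    ∀ x : ℝ, ∀ t ∈ Ioo 0 T,
      (pdt r x t + (φ (r x t) + 2 * r x t * deriv φ (r x t)) * pdx r x t
        = ε * (2 * pdx (pdx r) x t - (pdx r x t) ^ 2 / r x t)) ∧
      (pdt ξ x t + (φ (r x t) - ε * pdx r x t / r x t) * pdx ξ x t = 0) := by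
  intro x t ht
  have hu0 : 0 < u x t := hupos x t ht
  have hv0 : 0 < v x t := hvpos x t ht
  have hU : ContDiff ℝ 2 (fun y => u y t) := hux t ht
  have hV : ContDiff ℝ 2 (fun y => v y t) := hvx t ht
  have hUd : Differentiable ℝ (fun y => u y t) := hU.differentiable two_ne_zero
  have hVd : Differentiable ℝ (fun y => v y t) := hV.differentiable two_ne_zero
  have hU' : Differentiable ℝ (deriv (fun y => u y t)) := by
    have h2 : ContDiff ℝ ((1 : ℕ) + 1) (fun y => u y t) := by exact_mod_cast hU
    exact ((contDiff_succ_iff_deriv.mp h2).2.2).differentiable (by simp)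
  have hV' : Differentiable ℝ (deriv (fun y => v y t)) := by
    have h2 : ContDiff ℝ ((1 : ℕ) + 1) (fun y => v y t) := by exact_mod_cast hV
    exact ((contDiff_succ_iff_deriv.mp h2).2.2).differentiable (by simp)
  -- space derivatives as HasDerivAt
  have hUx : ∀ y, HasDerivAt (fun y' => u y' t) (deriv (fun y' => u y' t) y) y :=
    fun y => (hUd y).hasDerivAt
  have hVx : ∀ y, HasDerivAt (fun y' => v y' t) (deriv (fun y' => v y' t) y) y :=
    fun y => (hVd y).hasDerivAt
  have hUxx : HasDerivAt (deriv (fun y' => u y' t)) (deriv (deriv (fun y' => u y' t)) x) x :=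
    (hU' x).hasDerivAt
  have hVxx : HasDerivAt (deriv (fun y' => v y' t)) (deriv (deriv (fun y' => v y' t)) x) x :=
    (hV' x).hasDerivAt
  -- time derivatives as HasDerivAt
  have hUt : HasDerivAt (fun s => u x s) (deriv (fun s => u x s) t) t := by
    exact (((hut x).contDiffAt (Ioo_mem_nhds ht.1 ht.2)).differentiableAt one_ne_zero).hasDerivAt
  have hVt : HasDerivAt (fun s => v x s) (deriv (fun s => v x s) t) t := by
    exact (((hvt x).contDiffAt (Ioo_mem_nhds ht.1 ht.2)).differentiableAt one_ne_zero).hasDerivAt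
  have hφd : ∀ z : ℝ, HasDerivAt φ (deriv φ z) z :=
    fun z => ((hφ.differentiable one_ne_zero) z).hasDerivAt
  -- abbreviations
  set a := u x t with ha
  set b := v x t with hb
  set p := deriv (fun y' => u y' t) x with hp
  set q := deriv (fun y' => v y' t) x with hq
  set P := deriv (deriv (fun y' => u y' t)) x with hP
  set Q := deriv (deriv (fun y' => v y' t)) x with hQ
  set s := deriv (fun s' => u x s') t with hs
  set w := deriv (fun s' => v x s') t with hw
  -- computed derivatives
  have h_rt : pdt r x t = s * b + a * w := by
    have hfun : (fun s' => r x s') = fun s' => u x s' * v x s' := funext fun s' => hr x s'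
    rw [pdt, hfun]
    exact (hUt.mul hVt).deriv
  have h_rx : ∀ y, pdx r y t
      = deriv (fun y' => u y' t) y * v y t + u y t * deriv (fun y' => v y' t) y := by
    intro y
    have hfun : (fun y' => r y' t) = fun y' => u y' t * v y' t := funext fun y' => hr y' t
    rw [pdx, hfun]
    exact ((hUx y).mul (hVx y)).deriv
  have h_rxx : pdx (pdx r) x t = (P * b + p * q) + (p * q + a * Q) := by
    rw [pdx]
    have hfun : (fun y => pdx r y t)
        = fun y => deriv (fun y' => u y' t) y * v y t + u y t * deriv (fun y' => v y' t) y :=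
      funext fun y => h_rx y
    rw [hfun]
    exact ((hUxx.mul (hVx x)).add ((hUx x).mul hVxx)).deriv
  have hrx : pdx r x t = p * b + a * q := h_rx x
  have h_prod : HasDerivAt (fun y => u y t * v y t) (p * b + a * q) x := (hUx x).mul (hVx x)
  have h_comp : HasDerivAt (fun y => φ (u y t * v y t)) (deriv φ (a * b) * (p * b + a * q)) x :=
    (hφd (a * b)).comp x h_prod
  have hflux1 : pdx (fun x t => u x t * φ (u x t * v x t)) x t
      = p * φ (a * b) + a * (deriv φ (a * b) * (p * b + a * q)) := by
    rw [pdx]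
    exact ((hUx x).mul h_comp).deriv
  have hflux2 : pdx (fun x t => v x t * φ (u x t * v x t)) x t
      = q * φ (a * b) + b * (deriv φ (a * b) * (p * b + a * q)) := by
    rw [pdx]
    exact ((hVx x).mul h_comp).deriv
  have hNum : HasDerivAt
      (fun y => deriv (fun y' => u y' t) y * v y t + u y t * deriv (fun y' => v y' t) y)
      ((P * b + p * q) + (p * q + a * Q)) x :=
    (hUxx.mul (hVx x)).add ((hUx x).mul hVxx)
  have hinner : (fun y => pdx (fun y' s' => u y' s' * v y' s') y t)
      = fun y => deriv (fun y' => u y' t) y * v y t + u y t * deriv (fun y' => v y' t) y := by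
    funext y
    rw [pdx]
    exact ((hUx y).mul (hVx y)).deriv
  have hvisc1 : pdx (fun x t => pdx (fun y s => u y s * v y s) x t / v x t) x t
      = (((P * b + p * q) + (p * q + a * Q)) * b - (p * b + a * q) * q) / b ^ 2 := by
    rw [pdx]
    have hfun : (fun y => pdx (fun y' s' => u y' s' * v y' s') y t / v y t)
        = fun y => (deriv (fun y' => u y' t) y * v y t + u y t * deriv (fun y' => v y' t) y)
            / v y t := by
      funext y
      rw [congrFun hinner y]
    rw [hfun]
    exact (hNum.div (hVx x) hv0.ne').deriv
  have hvisc2 : pdx (fun x t => pdx (fun y s => u y s * v y s) x t / u x t) x t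
      = (((P * b + p * q) + (p * q + a * Q)) * a - (p * b + a * q) * p) / a ^ 2 := by
    rw [pdx]
    have hfun : (fun y => pdx (fun y' s' => u y' s' * v y' s') y t / u y t)
        = fun y => (deriv (fun y' => u y' t) y * v y t + u y t * deriv (fun y' => v y' t) y)
            / u y t := by
      funext y
      rw [congrFun hinner y]
    rw [hfun]
    exact (hNum.div (hUx x) hu0.ne').deriv
  have hξt : pdt ξ x t = (s * b - a * w) / b ^ 2 := by
    have hfun : (fun s' => ξ x s') = fun s' => u x s' / v x s' := funext fun s' => hξ x s'
    rw [pdt, hfun]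
    exact (hUt.div hVt hv0.ne').deriv
  have hξx : pdx ξ x t = (p * b - a * q) / b ^ 2 := by
    have hfun : (fun y => ξ y t) = fun y => u y t / v y t := funext fun y => hξ y t
    rw [pdx, hfun]
    exact ((hUx x).div (hVx x) hv0.ne').deriv
  -- PDE equations in explicit form
  have e1 := hpde1 x t ht
  have e2 := hpde2 x t ht
  rw [show pdt u x t = s from rfl, hflux1, hvisc1] at e1
  rw [show pdt v x t = w from rfl, hflux2, hvisc2] at e2
  have hs_eq : s = ε * ((((P * b + p * q) + (p * q + a * Q)) * b - (p * b + a * q) * q) / b ^ 2)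
      - (p * φ (a * b) + a * (deriv φ (a * b) * (p * b + a * q))) := by linarith
  have hw_eq : w = ε * ((((P * b + p * q) + (p * q + a * Q)) * a - (p * b + a * q) * p) / a ^ 2)
      - (q * φ (a * b) + b * (deriv φ (a * b) * (p * b + a * q))) := by linarith
  constructor
  · rw [h_rt, hrx, h_rxx, hr x t, hs_eq, hw_eq, ← ha, ← hb]
    field_simp
    ring
  · rw [hξt, hξx, hrx, hr x t, hs_eq, hw_eq, ← ha, ← hb]
    field_simp
    ring
end
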